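/- Over the alphabet Fin 2 (write a = 0 and b = 1), the relation T = {(List.replicate m a, List.replicate m b ++ List.replicate m' a) | m m' : ℕ, m ≤ m'} is not a rational relation: for every finite type Γ, every regular language L : Language Γ, and all functions f g : Γ → Option (Fin 2), the set {(u.filterMap f, u.filterMap g) | u ∈ L} is not equal to T. (T is the intersection of the regular relation {(a^m, b^m·a^{m'}) | m, m' : ℕ} with the subsequence relation.) -/

import Mathlib

theorem filterMap_split {α β} (g : α → Option β) :
    ∀ (u : List α) (v w : List β), u.filterMap g = v ++ w →
    ∃ u₁ u₂, u = u₁ ++ u₂ ∧ u₁.filterMap g = v ∧ u₂.filterMap g = w := by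
  intro u
  induction u with
  | nil => intro v w h; exact ⟨[], [], rfl, by simpa using (List.append_eq_nil_iff.mp h.symm).1 ▸ rfl, by
      simp [(List.append_eq_nil_iff.mp h.symm).2]⟩
  | cons a u ih =>
    intro v w h
    cases hga : g a with
    | none =>
      rw [List.filterMap_cons, hga] at h
      obtain ⟨u₁, u₂, rfl, h1, h2⟩ := ih v w h
      exact ⟨a :: u₁, u₂, rfl, by simp [List.filterMap_cons, hga, h1], h2⟩
    | some b =>
      rw [List.filterMap_cons, hga] at h
      cases v with
      | nil =>
        exact ⟨[], a :: u, rfl, rfl, by rw [List.filterMap_cons, hga]; simpa using h⟩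
      | cons c v =>
        simp only [List.cons_append, List.cons.injEq] at h
        obtain ⟨u₁, u₂, rfl, h1, h2⟩ := ih v w h.2
        exact ⟨a :: u₁, u₂, rfl, by simp [List.filterMap_cons, hga, h1, h.1], h2⟩

/-- NFA recognizing the image of a DFA's language under an alphabetic morphism. -/
def imageNFA {Γ B Q : Type} (M : DFA Γ Q) (g : Γ → Option B) : NFA B Q where
  step q b := {q' | ∃ w : List Γ, w.filterMap g = [b] ∧ M.evalFrom q w = q'}
  start := {q | ∃ w : List Γ, w.filterMap g = [] ∧ M.evalFrom M.start w = q}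
  accept := M.accept

theorem imageNFA_eval {Γ B Q : Type} (M : DFA Γ Q) (g : Γ → Option B) (v : List B) (q : Q) :
    q ∈ (imageNFA M g).eval v ↔ ∃ u : List Γ, u.filterMap g = v ∧ M.eval u = q := by
  induction v using List.reverseRecOn generalizing q with
  | nil => exact Iff.rfl
  | append_singleton v b ih =>
    rw [NFA.eval_append_singleton, NFA.mem_stepSet]
    constructor
    · rintro ⟨t, ht, w, hw, rfl⟩
      obtain ⟨u, hu, hu2⟩ := (ih t).mp ht
      refine ⟨u ++ w, ?_, ?_⟩
      · rw [List.filterMap_append, hu, hw]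
      · rw [DFA.eval, DFA.evalFrom_of_append]
        exact congrArg (fun s => M.evalFrom s w) hu2
    · rintro ⟨u, hu, rfl⟩
      obtain ⟨u₁, u₂, rfl, h1, h2⟩ := filterMap_split g u v [b] hu
      exact ⟨M.eval u₁, (ih _).mpr ⟨u₁, h1, rfl⟩, u₂, h2,
        (DFA.evalFrom_of_append M M.start u₁ u₂).symm⟩

theorem imageNFA_accepts {Γ B Q : Type} (M : DFA Γ Q) (g : Γ → Option B) :
    (imageNFA M g).accepts = {v | ∃ u ∈ M.accepts, v = u.filterMap g} := by
  ext v
  rw [NFA.mem_accepts]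
  constructor
  · rintro ⟨q, hq, hq2⟩
    obtain ⟨u, hu, hu2⟩ := (imageNFA_eval M g v q).mp hq2
    exact ⟨u, by rwa [DFA.mem_accepts, hu2], hu.symm⟩
  · rintro ⟨u, hu, rfl⟩
    exact ⟨M.eval u, hu, (imageNFA_eval M g _ _).mpr ⟨u, rfl, rfl⟩⟩

/-- A language is regular if it is accepted by a DFA with finitely many states. -/
def IsRegularLang {A : Type} (L : Language A) : Prop :=
  ∃ (Q : Type) (_ : Fintype Q) (M : DFA A Q), M.accepts = L

theorem isRegularLang_image {Γ B : Type} (L : Language Γ) (hL : IsRegularLang L)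
    (g : Γ → Option B) : IsRegularLang {v | ∃ u ∈ L, v = u.filterMap g} := by
  obtain ⟨Q, fQ, M, rfl⟩ := hL
  exact ⟨Set Q, Set.fintype, (imageNFA M g).toDFA,
    by rw [NFA.toDFA_correct, imageNFA_accepts]⟩

/-- The relation `{(aᵐ, bᵐ·aᵐ') | m ≤ m'}` (the intersection of a regular relation
with the subsequence relation) is not a rational relation, in the sense of Nivat's
characterization of binary rational relations. -/
theorem intersection_regular_subseq_not_rational
    (Γ : Type) [Fintype Γ] (L : Language Γ) (hL : IsRegularLang L)
    (f g : Γ → Option (Fin 2)) :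
    {p : List (Fin 2) × List (Fin 2) | ∃ u ∈ L, p = (u.filterMap f, u.filterMap g)} ≠
    {p : List (Fin 2) × List (Fin 2) | ∃ m m' : ℕ, m ≤ m' ∧
      p = (List.replicate m (0 : Fin 2),
           List.replicate m (1 : Fin 2) ++ List.replicate m' (0 : Fin 2))} := by
  intro h
  -- project to second component
  have hproj : {v : List (Fin 2) | ∃ u ∈ L, v = u.filterMap g} =
      {w : List (Fin 2) | ∃ m m' : ℕ, m ≤ m' ∧
        w = List.replicate m (1 : Fin 2) ++ List.replicate m' (0 : Fin 2)} := by
    ext v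
    constructor
    · rintro ⟨u, hu, rfl⟩
      have : (u.filterMap f, u.filterMap g) ∈ {p : List (Fin 2) × List (Fin 2) |
          ∃ m m' : ℕ, m ≤ m' ∧ p = (List.replicate m (0 : Fin 2),
          List.replicate m (1 : Fin 2) ++ List.replicate m' (0 : Fin 2))} := by
        rw [← h]; exact ⟨u, hu, rfl⟩
      obtain ⟨m, m', hmm, hp⟩ := this
      exact ⟨m, m', hmm, congrArg Prod.snd hp⟩
    · rintro ⟨m, m', hmm, rfl⟩
      have : (List.replicate m (0 : Fin 2),
          List.replicate m (1 : Fin 2) ++ List.replicate m' (0 : Fin 2)) ∈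
          {p : List (Fin 2) × List (Fin 2) | ∃ u ∈ L,
            p = (u.filterMap f, u.filterMap g)} := by
        rw [h]; exact ⟨m, m', hmm, rfl⟩
      obtain ⟨u, hu, hp⟩ := this
      exact ⟨u, hu, congrArg Prod.snd hp⟩
  -- the projected language is regular
  have hreg := isRegularLang_image L hL g
  rw [hproj] at hreg
  obtain ⟨P, fP, D, hD⟩ := hreg
  set n := Fintype.card P with hn
  have hn1 : 1 ≤ n := @Fintype.card_pos P fP ⟨D.start⟩
  -- pump the word 1^n 0^n
  have hw : List.replicate n (1 : Fin 2) ++ List.replicate n (0 : Fin 2) ∈ D.accepts := by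
    rw [hD]; exact ⟨n, n, le_refl n, rfl⟩
  have hlen : Fintype.card P ≤
      (List.replicate n (1 : Fin 2) ++ List.replicate n (0 : Fin 2)).length := by
    simp only [List.length_append, List.length_replicate, ← hn]; omega
  obtain ⟨x, y, z, hxyz, hxy, hy, hpump⟩ := D.pumping_lemma hw hlen
  -- x ++ y is all ones
  have hxy' : x.length + y.length ≤ n := by rw [hn]; exact hxy
  have hx1 : x ++ y = List.replicate (x.length + y.length) (1 : Fin 2) := by
    have h1 : List.take (x.length + y.length) (x ++ y ++ z) = x ++ y := by
      rw [← (List.length_append : (x ++ y).length = _), List.take_left]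
    rw [← hxyz, List.take_append_of_le_length (by simpa using hxy'),
      List.take_replicate, min_eq_left hxy'] at h1
    exact h1.symm
  have hy1 : y = List.replicate y.length (1 : Fin 2) := by
    have := congrArg (List.drop x.length) hx1
    rwa [List.drop_left, List.drop_replicate, Nat.add_sub_cancel_left] at this
  -- the pumped word x y y z is in the language
  have hmem : x ++ (y ++ y) ++ z ∈ D.accepts := by
    apply hpump
    refine ⟨x ++ (y ++ y), ⟨x, rfl, y ++ y, ?_, rfl⟩, z, rfl, rfl⟩
    exact Language.mem_kstar.mpr ⟨[y, y], by simp,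
      fun w hw => by rcases List.mem_pair.mp hw with rfl | rfl <;> rfl⟩
  rw [hD] at hmem
  obtain ⟨m, m', hmm, heq⟩ := hmem
  -- counting ones and zeros
  have hcount1 : ∀ w : List (Fin 2), w = List.replicate n (1 : Fin 2) ++
      List.replicate n (0 : Fin 2) → w.count (1 : Fin 2) = n ∧ w.count (0 : Fin 2) = n := by
    rintro w rfl
    constructor <;> simp [List.count_append, List.count_replicate]
  have hbase := hcount1 _ hxyz.symm
  have hc1 : x.count (1 : Fin 2) + y.count 1 + z.count 1 = n := by
    have := hbase.1; simp only [List.count_append] at this; omega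
  have hc0 : x.count (0 : Fin 2) + y.count 0 + z.count 0 = n := by
    have := hbase.2; simp only [List.count_append] at this; omega
  have hyc1 : y.count (1 : Fin 2) = y.length := by
    conv_lhs => rw [hy1]
    simp [List.count_replicate]
  have hyc0 : y.count (0 : Fin 2) = 0 := by
    conv_lhs => rw [hy1]
    simp [List.count_replicate]
  have e11 : ∀ k, List.count (1 : Fin 2) (List.replicate k (1 : Fin 2)) = k :=
    fun k => by rw [List.count_replicate]; rfl
  have e10 : ∀ k, List.count (1 : Fin 2) (List.replicate k (0 : Fin 2)) = 0 :=
    fun k => by rw [List.count_replicate]; rfl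
  have e00 : ∀ k, List.count (0 : Fin 2) (List.replicate k (0 : Fin 2)) = k :=
    fun k => by rw [List.count_replicate]; rfl
  have e01 : ∀ k, List.count (0 : Fin 2) (List.replicate k (1 : Fin 2)) = 0 :=
    fun k => by rw [List.count_replicate]; rfl
  have hm : m = n + y.length := by
    have := congrArg (List.count (1 : Fin 2)) heq
    simp only [List.count_append, e11, e10] at this
    omega
  have hm' : m' = n := by
    have := congrArg (List.count (0 : Fin 2)) heq
    simp only [List.count_append, e00, e01] at this
    omega
  have : y.length = 0 := by omega
  exact hy (List.length_eq_zero_iff.mp this)
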